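/- Suppose f : X → Y is a visual large scale Lipschitz function between proper hyperbolic geodesic spaces with basepoints a and b = f(a), and n ≥ 1. The induced map tilde f : ∂X → ∂Y is n-to-1 (every point of ∂Y has at most n preimages) if and only if for each r > 0 there is B > 0 such that for any sequence of n+1 points x₁,…,x_{n+1} in X satisfying (x_i,x_j)_a < r for all i ≠ j, there are two different indices k, m ≤ n+1 with (f(x_k),f(x_m))_b ≤ B. -/
import Mathlib


open Filter Metric Set

noncomputable section

namespace Gromov

variable {X : Type*} [MetricSpace X] {Y : Type*} [MetricSpace Y]

/-- The Gromov product `(x,y)_a = (d(x,a)+d(y,a)-d(x,y))/2`. -/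
def gp (a x y : X) : ℝ := (dist x a + dist y a - dist x y) / 2

/-- Gromov `δ`-hyperbolicity via the `δ/4`-inequality. -/
def IsDeltaHyperbolic (X : Type*) [MetricSpace X] (δ : ℝ) : Prop :=
  ∀ x y z w : X, gp w x y ≥ min (gp w x z) (gp w z y) - δ / 4

/-- `γ` is a geodesic starting at `x`, parametrized by arclength on `[0, M]`. -/
def IsGeodesicOn (γ : ℝ → X) (x : X) (M : ℝ) : Prop :=
  γ 0 = x ∧ ∀ s ∈ Icc (0:ℝ) M, ∀ t ∈ Icc (0:ℝ) M, dist (γ s) (γ t) = |s - t|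

/-- Every two points are joined by a geodesic. -/
def IsGeodesicSpace (X : Type*) [MetricSpace X] : Prop :=
  ∀ x y : X, ∃ γ : ℝ → X, IsGeodesicOn γ x (dist x y) ∧ γ (dist x y) = y

/-- An infinite geodesic ray emanating from `x`. -/
def IsRay (γ : ℝ → X) (x : X) : Prop :=
  γ 0 = x ∧ ∀ s ∈ Ici (0:ℝ), ∀ t ∈ Ici (0:ℝ), dist (γ s) (γ t) = |s - t|

/-- `f` is `(l, μ)`-large scale Lipschitz. -/
def IsLSL (f : X → Y) (l μ : ℝ) : Prop :=
  ∀ x y : X, dist (f x) (f y) ≤ l * dist x y + μ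

/-- `f` is large scale Lipschitz. -/
def LSL (f : X → Y) : Prop := ∃ l μ : ℝ, 0 < l ∧ 0 < μ ∧ IsLSL f l μ

/-- The `(l2, μ2)`-radial lower bound condition with respect to `x₀`:
on every finite geodesic emanating from `x₀`, `l2·d(x,y) - μ2 ≤ d(f(x),f(y))`. -/
def IsRadialWith (f : X → Y) (x₀ : X) (l2 μ2 : ℝ) : Prop :=
  ∀ M, 0 ≤ M → ∀ γ : ℝ → X, IsGeodesicOn γ x₀ M →
    ∀ s ∈ Icc (0:ℝ) M, ∀ t ∈ Icc (0:ℝ) M,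
      l2 * dist (γ s) (γ t) - μ2 ≤ dist (f (γ s)) (f (γ t))

/-- `f` is a radial function with respect to `x₀`. -/
def Radial (f : X → Y) (x₀ : X) : Prop :=
  LSL f ∧ ∃ l2 μ2 : ℝ, 0 < l2 ∧ 0 < μ2 ∧ IsRadialWith f x₀ l2 μ2

/-- `f` is visual: for some basepoint `a`, `(x_n,y_n)_a → ∞` implies
`(f(x_n),f(y_n))_{f(a)} → ∞`. -/
def VisualFn (f : X → Y) : Prop :=
  ∃ a : X, ∀ x y : ℕ → X,
    Tendsto (fun n => gp a (x n) (y n)) atTop atTop →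
    Tendsto (fun n => gp (f a) (f (x n)) (f (y n))) atTop atTop

/-- `liminf_{i,j→∞} (x_i,x_j)_a = ∞`: the sequence converges to infinity. -/
def ConvSeq (a : X) (x : ℕ → X) : Prop :=
  Tendsto (fun p : ℕ × ℕ => gp a (x p.1) (x p.2)) atTop atTop

/-- `liminf_{i,j→∞} (x_i,y_j)_a = ∞`: the two sequences are equivalent. -/
def SeqEquiv (a : X) (x y : ℕ → X) : Prop :=
  Tendsto (fun p : ℕ × ℕ => gp a (x p.1) (y p.2)) atTop atTop

def BSeq (a : X) : Type _ := {x : ℕ → X // ConvSeq a x}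

/-- The sequential boundary `∂X` with basepoint `a`. -/
def Boundary (a : X) : Type _ := Quot (fun x y : BSeq a => SeqEquiv a x.1 y.1)

/-- The boundary point represented by a sequence. -/
def bpt (a : X) (x : ℕ → X) (hx : ConvSeq a x) : Boundary a :=
  Quot.mk _ ⟨x, hx⟩

/-- `liminf_{i,j→∞} (x_i,y_j)_a` as an extended real. -/
def gpSeqs (a : X) (x y : ℕ → X) : EReal :=
  liminf (fun p : ℕ × ℕ => ((gp a (x p.1) (y p.2)) : EReal)) atTop

/-- The basic neighborhood `U(p,r)` in the sequential boundary. -/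
def U (a : X) (p : Boundary a) (r : ℝ) : Set (Boundary a) :=
  {q | ∃ (x y : ℕ → X) (hx : ConvSeq a x) (hy : ConvSeq a y),
    bpt a x hx = p ∧ bpt a y hy = q ∧ (r : EReal) ≤ gpSeqs a x y}

instance (a : X) : TopologicalSpace (Boundary a) :=
  TopologicalSpace.generateFrom {s | ∃ p r, 0 < r ∧ s = U a p r}

/-- The union `X ∪ ∂X`. -/
def Comp (a : X) : Type _ := X ⊕ Boundary a

def Comp.inl {a : X} (x : X) : Comp a := Sum.inl x
def Comp.inr {a : X} (p : Boundary a) : Comp a := Sum.inr p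

/-- The extension of `U(p,r)` to `X ∪ ∂X`. -/
def UFull (a : X) (p : Boundary a) (r : ℝ) : Set (Comp a) :=
  {z : X ⊕ Boundary a | Sum.elim
    (fun x : X => ∃ (s : ℕ → X) (hs : ConvSeq a s), bpt a s hs = p ∧
      (r : EReal) ≤ liminf (fun i : ℕ => ((gp a (s i) x) : EReal)) atTop)
    (fun q : Boundary a => q ∈ U a p r) z}

instance (a : X) : TopologicalSpace (Comp a) :=
  TopologicalSpace.generateFrom
    ({s | ∃ u : Set X, IsOpen u ∧ s = Comp.inl '' u} ∪
     {s | ∃ p r, 0 < r ∧ s = UFull a p r})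

/-- The Gromov product of two boundary points:
`(p,q)_a = inf liminf_{i→∞} (x_i,y_i)_a` over representatives. -/
def gpBoundary (a : X) (p q : Boundary a) : EReal :=
  sInf {e : EReal | ∃ (x y : ℕ → X) (hx : ConvSeq a x) (hy : ConvSeq a y),
    bpt a x hx = p ∧ bpt a y hy = q ∧
    e = liminf (fun i : ℕ => ((gp a (x i) (y i)) : EReal)) atTop}

/-- `K^{-e}` for an extended real exponent `e` (with `K^{-∞} = 0`). -/
def negPow (K : ℝ) (e : EReal) : ℝ :=
  if e = ⊤ then 0 else if e = ⊥ then 0 else Real.rpow K (-(e.toReal))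

/-- `d` is a visual metric on `∂X` with parameters `K, C > 1`. -/
def IsVisualMetric (a : X) (d : Boundary a → Boundary a → ℝ) (K C : ℝ) : Prop :=
  1 < K ∧ 1 < C ∧ ∀ p q : Boundary a,
    negPow K (gpBoundary a p q) / C ≤ d p q ∧ d p q ≤ C * negPow K (gpBoundary a p q)

/-- A map between sets with distinguished distance functions is Hölder. -/
def IsHolder {A B : Type*} (dA : A → A → ℝ) (dB : B → B → ℝ) (g : A → B) : Prop :=
  ∃ L α : ℝ, 0 < L ∧ 0 < α ∧ ∀ p q : A, dB (g p) (g q) ≤ L * Real.rpow (dA p q) α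

/-- `(ξ₁,ξ₂)_a = liminf_{t→∞} (ξ₁(t),ξ₂(t))_a` for rays. -/
def gpRays (a : X) (ξ₁ ξ₂ : ℝ → X) : EReal :=
  liminf (fun t : ℝ => ((gp a (ξ₁ t) (ξ₂ t)) : EReal)) atTop

/-- The geodesic ray `ξ` represents the boundary point `p`. -/
def RayRepresents (a : X) (ξ : ℝ → X) (p : Boundary a) : Prop :=
  ∃ h : ConvSeq a (fun n : ℕ => ξ n), bpt a (fun n : ℕ => ξ n) h = p

/-- `(x,ξ)_a = liminf_{n→∞} (x,ξ(n))_a`. -/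
def gpPointRay (a x : X) (ξ : ℝ → X) : ℝ :=
  liminf (fun n : ℕ => gp a x (ξ n)) atTop

/-- `X` is a visual hyperbolic space with basepoint `a` and constant `D`. -/
def IsVisualSpace (a : X) (D : ℝ) : Prop :=
  ∀ x : X, ∃ ξ : ℝ → X, IsRay ξ a ∧ gpPointRay a x ξ > dist x a - D

/-- A maximal finite geodesic from `a`: it admits no proper geodesic extension. -/
def MaximalGeodesic (ζ : ℝ → X) (a : X) (M : ℝ) : Prop :=
  IsGeodesicOn ζ a M ∧
    ¬ ∃ (M' : ℝ) (ζ' : ℝ → X), M < M' ∧ IsGeodesicOn ζ' a M' ∧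
      ∀ t ∈ Icc (0:ℝ) M, ζ' t = ζ t

/-- `f : X → Y` is a radial extension with parameter `A` of `g : ∂X → ∂Y`
(`D` being the visuality constant of `X`). -/
def IsRadialExtension (a : X) (b : Y) (g : Boundary a → Boundary b)
    (A D : ℝ) (f : X → Y) : Prop :=
  f a = b ∧
  ∀ x : X, x ≠ a →
    ((∃ (ξ : ℝ → X) (t : ℝ), IsRay ξ a ∧ 0 ≤ t ∧ ξ t = x) →
      ∃ (ξ : ℝ → X) (t : ℝ) (η : ℝ → Y), IsRay ξ a ∧ 0 ≤ t ∧ ξ t = x ∧ IsRay η b ∧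
        (∃ p : Boundary a, RayRepresents a ξ p ∧ RayRepresents b η (g p)) ∧
        f x = η (A * t)) ∧
    ((¬ ∃ (ξ : ℝ → X) (t : ℝ), IsRay ξ a ∧ 0 ≤ t ∧ ξ t = x) →
      ∃ (M t : ℝ) (ζ ξ : ℝ → X) (η : ℝ → Y),
        MaximalGeodesic ζ a M ∧ t ∈ Icc (0:ℝ) M ∧ ζ t = x ∧
        IsRay ξ a ∧ gpPointRay a (ζ M) ξ > dist (ζ M) a - D ∧ IsRay η b ∧
        (∃ p : Boundary a, RayRepresents a ξ p ∧ RayRepresents b η (g p)) ∧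
        f x = η (A * t))

/-- `f` is coarsely surjective. -/
def CoarselySurjective (f : X → Y) : Prop :=
  ∃ S : ℝ, 0 < S ∧ ∀ y : Y, ∃ x : X, dist y (f x) ≤ S

/-- `f` is bornologous (coarse). -/
def Bornologous (f : X → Y) : Prop :=
  ∀ R : ℝ, 0 < R → ∃ S : ℝ, 0 < S ∧ ∀ x x' : X, dist x x' ≤ R → dist (f x) (f x') ≤ S

/-- `f` is a coarse embedding. -/
def CoarseEmbedding (f : X → Y) : Prop :=
  Bornologous f ∧
    ∀ R : ℝ, 0 < R → ∃ S : ℝ, 0 < S ∧ ∀ x x' : X, dist (f x) (f x') ≤ R → dist x x' ≤ S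

/-- `f` is coarsely `n`-to-1. -/
def CoarselyNto1 (f : X → Y) (n : ℕ) : Prop :=
  ∀ R : ℝ, 0 < R → ∃ S : ℝ, 0 < S ∧ ∀ A : Set Y, EMetric.diam A < ENNReal.ofReal R →
    ∃ B : Fin n → Set X, (f ⁻¹' A = ⋃ i, B i) ∧
      ∀ i, EMetric.diam (B i) < ENNReal.ofReal S

/-- `g : ∂X → ∂Y` is the boundary map induced by `f`, i.e. `g [(x_n)] = [(f(x_n))]`. -/
def InducedBoundaryMap (a : X) (f : X → Y) (g : Boundary a → Boundary (f a)) : Prop :=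
  ∀ (x : ℕ → X) (hx : ConvSeq a x) (hfx : ConvSeq (f a) (f ∘ x)),
    g (bpt a x hx) = bpt (f a) (f ∘ x) hfx

/-- `g` is (at most) `n`-to-1. -/
def NTo1 {A B : Type*} (g : A → B) (n : ℕ) : Prop :=
  ∀ b : B, ∃ s : Finset A, s.card ≤ n ∧ ∀ a : A, g a = b → a ∈ s

/-- Covering dimension at most `n`: every open cover admits an open refinement
of multiplicity at most `n+1`. -/
def CovDimLE (Z : Type*) [TopologicalSpace Z] (n : ℕ) : Prop :=
  ∀ 𝒰 : Set (Set Z), (∀ u ∈ 𝒰, IsOpen u) → ⋃₀ 𝒰 = univ →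
    ∃ 𝒱 : Set (Set Z), (∀ v ∈ 𝒱, IsOpen v) ∧ ⋃₀ 𝒱 = univ ∧
      (∀ v ∈ 𝒱, ∃ u ∈ 𝒰, v ⊆ u) ∧
      ∀ z : Z, {v ∈ 𝒱 | z ∈ v}.Finite ∧ {v ∈ 𝒱 | z ∈ v}.ncard ≤ n + 1

/-- `c_{f,n}(r)`: the supremum of numbers `B` such that there exist `n+1` points
with mutual Gromov products `< r` whose images have mutual Gromov products `≥ B`. -/
def cfn (a : X) (b : Y) (f : X → Y) (n : ℕ) (r : ℝ) : EReal :=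
  sSup {e : EReal | ∃ (B : ℝ) (x : Fin (n + 1) → X), e = (B : EReal) ∧
    (∀ i j, i ≠ j → gp a (x i) (x j) < r) ∧
    (∀ i j, i ≠ j → B ≤ gp b (f (x i)) (f (x j)))}

-- ===================== auxiliary lemmas =====================

open Topology

section Aux

variable {X : Type*} [MetricSpace X] {Y : Type*} [MetricSpace Y]

lemma gp_nonneg (a x y : X) : 0 ≤ gp a x y := by
  unfold gp
  rw [dist_comm y a]
  linarith [dist_triangle x a y]

lemma gp_le_left (a x y : X) : gp a x y ≤ dist x a := by
  unfold gp
  have := abs_dist_sub_le x y a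
  rw [abs_sub_le_iff] at this
  linarith [this.2]

lemma gp_comm (a x y : X) : gp a x y = gp a y x := by
  unfold gp; rw [dist_comm x y]; ring

lemma gp_self (a x : X) : gp a x x = dist x a := by
  unfold gp; simp

lemma gp_base (a a' x y : X) : gp a x y ≤ gp a' x y + dist a a' := by
  unfold gp
  have h1 := dist_triangle x a' a
  have h2 := dist_triangle y a' a
  rw [dist_comm a a']
  linarith

lemma gp_ge_sub (a x y : X) : dist x a - dist x y ≤ gp a x y := by
  unfold gp
  linarith [dist_triangle x y a]

lemma pair_iff {F : ℕ × ℕ → ℝ} :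
    Tendsto F atTop atTop ↔
      ∀ C : ℝ, ∃ N : ℕ, ∀ k l, N ≤ k → N ≤ l → C ≤ F (k, l) := by
  rw [Filter.tendsto_atTop]
  constructor
  · intro h C
    obtain ⟨a, ha⟩ := eventually_atTop.mp (h C)
    exact ⟨max a.1 a.2, fun k l hk hl =>
      ha (k, l) ⟨le_trans (le_max_left _ _) hk, le_trans (le_max_right _ _) hl⟩⟩
  · intro h C
    obtain ⟨N, hN⟩ := h C
    exact eventually_atTop.mpr ⟨(N, N), fun b hb => hN b.1 b.2 hb.1 hb.2⟩

lemma seqEquiv_iff {a : X} {x y : ℕ → X} :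
    SeqEquiv a x y ↔ ∀ C : ℝ, ∃ N : ℕ, ∀ k l, N ≤ k → N ≤ l → C ≤ gp a (x k) (y l) :=
  pair_iff

lemma convSeq_iff {a : X} {x : ℕ → X} :
    ConvSeq a x ↔ ∀ C : ℝ, ∃ N : ℕ, ∀ k l, N ≤ k → N ≤ l → C ≤ gp a (x k) (x l) :=
  pair_iff

lemma delta_nonneg {δ : ℝ} (hX : IsDeltaHyperbolic X δ) (a : X) : 0 ≤ δ := by
  have := hX a a a a
  simp [gp_self] at this
  linarith

lemma seqEquiv_symm {a : X} {x y : ℕ → X} (h : SeqEquiv a x y) : SeqEquiv a y x := by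
  have h' := seqEquiv_iff.mp h
  apply seqEquiv_iff.mpr
  intro C
  obtain ⟨N, hN⟩ := h' C
  exact ⟨N, fun k l hk hl => (gp_comm a (y k) (x l)) ▸ hN l k hl hk⟩

lemma seqEquiv_trans {δ : ℝ} (hX : IsDeltaHyperbolic X δ) {a : X} {x y z : ℕ → X}
    (h1 : SeqEquiv a x y) (h2 : SeqEquiv a y z) : SeqEquiv a x z := by
  have h1' := seqEquiv_iff.mp h1
  have h2' := seqEquiv_iff.mp h2
  apply seqEquiv_iff.mpr
  intro C
  obtain ⟨N1, hN1⟩ := h1' (C + δ / 4)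
  obtain ⟨N2, hN2⟩ := h2' (C + δ / 4)
  refine ⟨max N1 N2, fun k l hk hl => ?_⟩
  have hh := hX (x k) (z l) (y k) a
  have e1 := hN1 k k (le_trans (le_max_left _ _) hk) (le_trans (le_max_left _ _) hk)
  have e2 := hN2 k l (le_trans (le_max_right _ _) hk) (le_trans (le_max_right _ _) hl)
  have : C ≤ min (gp a (x k) (y k)) (gp a (y k) (z l)) - δ / 4 := by
    have := le_min e1 e2
    linarith
  linarith [hh]

set_option maxHeartbeats 1000000 in
lemma bpt_eq_iff {δ : ℝ} (hX : IsDeltaHyperbolic X δ) {a : X} {x y : ℕ → X}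
    (hx : ConvSeq a x) (hy : ConvSeq a y) :
    bpt a x hx = bpt a y hy ↔ SeqEquiv a x y := by
  constructor
  · intro h
    have key : ∀ u v : BSeq a,
        Relation.EqvGen (fun u v : BSeq a => SeqEquiv a u.1 v.1) u v → SeqEquiv a u.1 v.1 := by
      intro u v h
      induction h with
      | rel _ _ h => exact h
      | refl u => exact u.2
      | symm _ _ _ ih => exact seqEquiv_symm ih
      | trans _ _ _ _ _ ih1 ih2 => exact seqEquiv_trans hX ih1 ih2
    exact key _ _ (Quot.eq.mp h)
  · exact fun h => Quot.sound h

lemma small_prop {δ : ℝ} (hX : IsDeltaHyperbolic X δ) {a : X} {x y : ℕ → X}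
    (hx : ConvSeq a x) (hy : ConvSeq a y) (hne : ¬ SeqEquiv a x y) :
    ∃ r : ℝ, ∃ N : ℕ, ∀ k l, N ≤ k → N ≤ l → gp a (x k) (y l) < r := by
  have hδ := delta_nonneg hX a
  have hne' : ¬ ∀ C : ℝ, ∃ N : ℕ, ∀ k l, N ≤ k → N ≤ l → C ≤ gp a (x k) (y l) :=
    fun h => hne (seqEquiv_iff.mpr h)
  push_neg at hne'
  obtain ⟨C, hC⟩ := hne'
  obtain ⟨N1, hN1⟩ := convSeq_iff.mp hx (C + δ + 1)
  obtain ⟨N2, hN2⟩ := convSeq_iff.mp hy (C + δ + 1)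
  set N := max N1 N2 with hNdef
  obtain ⟨k₀, l₀, hk₀, hl₀, hsmall⟩ := hC N
  refine ⟨C + δ, N, fun k l hk hl => ?_⟩
  by_contra hge
  push_neg at hge
  have A : C + δ + 1 ≤ gp a (x k₀) (x k) :=
    hN1 k₀ k (le_trans (le_max_left _ _) hk₀) (le_trans (le_max_left _ _) hk)
  have B : C + δ + 1 ≤ gp a (y l) (y l₀) :=
    hN2 l l₀ (le_trans (le_max_right _ _) hl) (le_trans (le_max_right _ _) hl₀)
  have h2 := hX (x k) (y l₀) (y l) a
  have h1 := hX (x k₀) (y l₀) (x k) a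
  have m2 : C + δ - δ / 4 ≤ gp a (x k) (y l₀) := by
    have : C + δ ≤ min (gp a (x k) (y l)) (gp a (y l) (y l₀)) := le_min hge (by linarith)
    linarith [h2]
  have m1 : C + δ - δ / 4 - δ / 4 ≤ gp a (x k₀) (y l₀) := by
    have : C + δ - δ / 4 ≤ min (gp a (x k₀) (x k)) (gp a (x k) (y l₀)) :=
      le_min (by linarith) m2
    linarith [h1]
  linarith

lemma geodesic_dist {γ : ℝ → X} {a : X} {R : ℝ} (hγ : IsGeodesicOn γ a R)
    {s : ℝ} (hs0 : 0 ≤ s) (hsR : s ≤ R) : dist (γ s) a = s := by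
  have h0 : (0:ℝ) ∈ Icc (0:ℝ) R := ⟨le_refl _, le_trans hs0 hsR⟩
  have := hγ.2 s ⟨hs0, hsR⟩ 0 h0
  rw [hγ.1] at this
  rw [this, sub_zero, abs_of_nonneg hs0]

lemma geodesic_proj {δ : ℝ} (hX : IsDeltaHyperbolic X δ) {γ : ℝ → X} {a : X} {R : ℝ}
    (hγ : IsGeodesicOn γ a R) {s : ℝ} (hs0 : 0 ≤ s) (hsR : s ≤ R) (z : X) :
    gp a (γ s) z ≤ gp a (γ R) z + δ / 4 := by
  have hR0 : 0 ≤ R := le_trans hs0 hsR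
  have d1 : dist (γ s) a = s := geodesic_dist hγ hs0 hsR
  have d2 : dist (γ R) a = R := geodesic_dist hγ hR0 (le_refl _)
  have d3 : dist (γ R) (γ s) = R - s := by
    rw [hγ.2 R ⟨hR0, le_refl _⟩ s ⟨hs0, hsR⟩, abs_of_nonneg (by linarith)]
  have hgp : gp a (γ R) (γ s) = s := by unfold gp; rw [d1, d2, d3]; ring
  have hle : gp a (γ s) z ≤ s := le_trans (gp_le_left a _ z) (le_of_eq d1)
  have hh := hX (γ R) z (γ s) a
  rw [hgp] at hh
  rw [min_eq_right hle] at hh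
  linarith

lemma gp_geo_endpoint {γ : ℝ → X} {a : X} {R : ℝ} (hγ : IsGeodesicOn γ a R)
    {s : ℝ} (hs0 : 0 ≤ s) (hsR : s ≤ R) (z : X) (hz : γ R = z) :
    gp a (γ s) z = s := by
  subst hz
  have hR0 : 0 ≤ R := le_trans hs0 hsR
  have d1 : dist (γ s) a = s := geodesic_dist hγ hs0 hsR
  have d2 : dist (γ R) a = R := geodesic_dist hγ hR0 (le_refl _)
  have d3 : dist (γ s) (γ R) = R - s := by
    rw [hγ.2 s ⟨hs0, hsR⟩ R ⟨hR0, le_refl _⟩, abs_of_nonpos (by linarith)]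
    ring
  unfold gp; rw [d1, d2, d3]; ring

lemma uvis {f : X → Y} (hvis : VisualFn f) (a : X) (C : ℝ) :
    ∃ D : ℝ, ∀ u v : X, D ≤ gp a u v → C ≤ gp (f a) (f u) (f v) := by
  obtain ⟨a', ha'⟩ := hvis
  by_contra h
  push_neg at h
  choose u v h1 h2 using h
  have hten : Tendsto (fun k : ℕ => gp a' (u ((k : ℝ) + dist a' a)) (v ((k : ℝ) + dist a' a)))
      atTop atTop := by
    apply tendsto_atTop_mono ?_ tendsto_natCast_atTop_atTop
    intro k
    have hb := gp_base a a' (u ((k : ℝ) + dist a' a)) (v ((k : ℝ) + dist a' a))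
    have hc := h1 ((k : ℝ) + dist a' a)
    rw [dist_comm a a'] at hb
    linarith
  have hten2 := ha' _ _ hten
  obtain ⟨k, hk⟩ := (hten2.eventually_ge_atTop (C + dist (f a) (f a'))).exists
  have hb := gp_base (f a') (f a) (f (u ((k : ℝ) + dist a' a))) (f (v ((k : ℝ) + dist a' a)))
  rw [dist_comm (f a') (f a)] at hb
  have hc := h2 ((k : ℝ) + dist a' a)
  linarith

end Aux


/-- the induced boundary map of a visual LSL function is `n`-to-1
iff for each `r > 0` there is `B > 0` such that among any `n+1` points with
mutual Gromov products `< r` two of the images have Gromov product `≤ B`. -/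
theorem stmt14 {X : Type*} [MetricSpace X] [ProperSpace X]
    {Y : Type*} [MetricSpace Y] [ProperSpace Y]
    (δ : ℝ) (hX : IsDeltaHyperbolic X δ) (hY : IsDeltaHyperbolic Y δ)
    (hgX : IsGeodesicSpace X) (hgY : IsGeodesicSpace Y)
    (f : X → Y) (hf : LSL f) (hvis : VisualFn f) (a : X) (n : ℕ) (hn : 1 ≤ n)
    (g : Boundary a → Boundary (f a)) (hg : InducedBoundaryMap a f g) :
    NTo1 g n ↔
      ∀ r : ℝ, 0 < r → ∃ B : ℝ, 0 < B ∧
        ∀ x : Fin (n + 1) → X, (∀ i j, i ≠ j → gp a (x i) (x j) < r) →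
          ∃ k m : Fin (n + 1), k ≠ m ∧ gp (f a) (f (x k)) (f (x m)) ≤ B := by
  obtain ⟨l, μ, hl, hμ, hlsl⟩ := hf
  have hδX : 0 ≤ δ := delta_nonneg hX a
  have huv : ∀ C : ℝ, ∃ D : ℝ, ∀ u v : X, D ≤ gp a u v → C ≤ gp (f a) (f u) (f v) :=
    uvis hvis a
  have htrans : ∀ (x y : ℕ → X), SeqEquiv a x y → SeqEquiv (f a) (f ∘ x) (f ∘ y) := by
    intro x y h
    apply seqEquiv_iff.mpr
    intro C
    obtain ⟨D, hD⟩ := huv C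
    obtain ⟨N, hN⟩ := seqEquiv_iff.mp h D
    exact ⟨N, fun k l hk hl => hD _ _ (hN k l hk hl)⟩
  have htransc : ∀ (x : ℕ → X), ConvSeq a x → ConvSeq (f a) (f ∘ x) :=
    fun x h => htrans x x h
  obtain ⟨i0, i1, hi01⟩ : ∃ i0 i1 : Fin (n+1), i0 ≠ i1 :=
    ⟨⟨0, by omega⟩, ⟨1, by omega⟩, by simp [Fin.ext_iff]⟩
  have hother : ∀ i : Fin (n+1), ∃ j, i ≠ j := by
    intro i
    rcases eq_or_ne i i0 with h | h
    · exact ⟨i1, h ▸ hi01⟩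
    · exact ⟨i0, h⟩
  constructor
  · -- n-to-1 implies the condition
    intro hN1 r hr
    by_contra hcon
    push_neg at hcon
    choose xm hx1 hx2 using fun m : ℕ => hcon ((m : ℝ) + 1) (by positivity)
    choose γ hγ hγend using fun (m : ℕ) (i : Fin (n+1)) => hgX a (xm m i)
    have hRlb : ∀ (m : ℕ) (i : Fin (n+1)), (m : ℝ) + 1 ≤ l * dist a (xm m i) + μ := by
      intro m i
      obtain ⟨j, hij⟩ := hother i
      have h1 := hx2 m i j hij
      have h2 : gp (f a) (f (xm m i)) (f (xm m j)) ≤ dist (f (xm m i)) (f a) :=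
        gp_le_left _ _ _
      have h3 := hlsl (xm m i) a
      rw [dist_comm (xm m i) a] at h3
      linarith
    have hRbig : ∀ T : ℝ, ∃ M : ℕ, ∀ m, M ≤ m → ∀ i, T ≤ dist a (xm m i) := by
      intro T
      refine ⟨⌈l * T + μ⌉₊, fun m hm i => ?_⟩
      have h1 := hRlb m i
      have h2 : l * T + μ ≤ (⌈l * T + μ⌉₊ : ℝ) := Nat.le_ceil _
      have h3 : ((⌈l * T + μ⌉₊ : ℕ) : ℝ) ≤ (m : ℝ) := Nat.cast_le.mpr hm
      have h4 : l * T < l * dist a (xm m i) := by linarith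
      exact le_of_lt ((mul_lt_mul_iff_right₀ hl).mp h4)
    set sq : ℕ → (Fin (n+1) × ℕ → X) :=
      fun m q => γ m q.1 (min (q.2 : ℝ) (dist a (xm m q.1))) with hsq
    have hmem : ∀ m : ℕ, sq m ∈ Set.pi univ (fun q : Fin (n+1) × ℕ => closedBall a (q.2 : ℝ)) := by
      intro m
      rw [Set.mem_univ_pi]
      intro q
      have h0 : 0 ≤ min (q.2 : ℝ) (dist a (xm m q.1)) := le_min (Nat.cast_nonneg _) dist_nonneg
      have h1 : min (q.2 : ℝ) (dist a (xm m q.1)) ≤ dist a (xm m q.1) := min_le_right _ _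
      have h2 := geodesic_dist (hγ m q.1) h0 h1
      rw [mem_closedBall]
      rw [hsq]
      exact le_of_le_of_eq (le_of_eq h2) rfl |>.trans (min_le_left _ _)
    obtain ⟨L, hL, φ, hφ, hconv⟩ :=
      (isCompact_univ_pi (fun q : Fin (n+1) × ℕ => isCompact_closedBall a (q.2 : ℝ))).tendsto_subseq hmem
    have hcoord : ∀ (i : Fin (n+1)) (t : ℕ),
        Tendsto (fun k => γ (φ k) i (min (t : ℝ) (dist a (xm (φ k) i)))) atTop (𝓝 (L (i, t))) :=
      fun i t => tendsto_pi_nhds.mp hconv (i, t)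
    have hEv : ∀ (i : Fin (n+1)) (t : ℕ), ∀ᶠ k : ℕ in atTop, (t : ℝ) ≤ dist a (xm (φ k) i) := by
      intro i t
      obtain ⟨M, hM⟩ := hRbig (t : ℝ)
      exact eventually_atTop.mpr ⟨M, fun k hk => hM (φ k) (le_trans hk hφ.le_apply) i⟩
    -- basic metric facts about the limit points
    have hdy : ∀ (i : Fin (n+1)) (s t : ℕ), dist (L (i, s)) (L (i, t)) = |(s : ℝ) - (t : ℝ)| := by
      intro i s t
      have h1 := (hcoord i s).dist (hcoord i t)
      have h2 : (fun k => dist (γ (φ k) i (min (s : ℝ) (dist a (xm (φ k) i))))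
          (γ (φ k) i (min (t : ℝ) (dist a (xm (φ k) i)))))
          =ᶠ[atTop] (fun _ => |(s : ℝ) - (t : ℝ)|) := by
        filter_upwards [hEv i s, hEv i t] with k hks hkt
        rw [min_eq_left hks, min_eq_left hkt]
        exact (hγ (φ k) i).2 s ⟨Nat.cast_nonneg _, hks⟩ t ⟨Nat.cast_nonneg _, hkt⟩
      exact tendsto_nhds_unique (h1.congr' h2) tendsto_const_nhds
    have hya : ∀ (i : Fin (n+1)) (t : ℕ), dist (L (i, t)) a = (t : ℝ) := by
      intro i t
      have h1 := (hcoord i t).dist (tendsto_const_nhds (x := a))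
      have h2 : (fun k => dist (γ (φ k) i (min (t : ℝ) (dist a (xm (φ k) i)))) a)
          =ᶠ[atTop] (fun _ => (t : ℝ)) := by
        filter_upwards [hEv i t] with k hkt
        rw [min_eq_left hkt]
        exact geodesic_dist (hγ (φ k) i) (Nat.cast_nonneg _) hkt
      exact tendsto_nhds_unique (h1.congr' h2) tendsto_const_nhds
    have hgpyy : ∀ (i : Fin (n+1)) (s t : ℕ),
        gp a (L (i, s)) (L (i, t)) = min (s : ℝ) (t : ℝ) := by
      intro i s t
      unfold gp
      rw [hya i s, hya i t, hdy i s t]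
      rcases le_total (s : ℝ) (t : ℝ) with h | h
      · rw [abs_of_nonpos (by linarith), min_eq_left h]; ring
      · rw [abs_of_nonneg (by linarith), min_eq_right h]; ring
    have hconvy : ∀ i : Fin (n+1), ConvSeq a (fun t => L (i, t)) := by
      intro i
      apply convSeq_iff.mpr
      intro C
      refine ⟨⌈C⌉₊, fun k lq hk hlq => ?_⟩
      have h0 : C ≤ (⌈C⌉₊ : ℝ) := Nat.le_ceil C
      have h1 : ((⌈C⌉₊ : ℕ) : ℝ) ≤ (k : ℝ) := Nat.cast_le.mpr hk
      have h2 : ((⌈C⌉₊ : ℕ) : ℝ) ≤ (lq : ℝ) := Nat.cast_le.mpr hlq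
      rw [hgpyy i k lq]
      exact le_min (by linarith) (by linarith)
    have hgptend : ∀ (i : Fin (n+1)) (s : ℕ) (j : Fin (n+1)) (t : ℕ),
        Tendsto (fun k => gp a (γ (φ k) i (min (s : ℝ) (dist a (xm (φ k) i))))
          (γ (φ k) j (min (t : ℝ) (dist a (xm (φ k) j))))) atTop
          (𝓝 (gp a (L (i, s)) (L (j, t)))) := by
      intro i s j t
      unfold gp
      exact ((((hcoord i s).dist tendsto_const_nhds).add
        ((hcoord j t).dist tendsto_const_nhds)).sub
        ((hcoord i s).dist (hcoord j t))).div_const 2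
    have hsmall : ∀ i j : Fin (n+1), i ≠ j → ∀ s t : ℕ,
        gp a (L (i, s)) (L (j, t)) ≤ r + δ / 4 + δ / 4 := by
      intro i j hij s t
      apply le_of_tendsto (hgptend i s j t)
      filter_upwards [hEv i s, hEv j t] with k hks hkt
      rw [min_eq_left hks, min_eq_left hkt]
      have e1 : gp a (γ (φ k) i (s : ℝ)) (γ (φ k) j (t : ℝ)) ≤
          gp a (xm (φ k) i) (γ (φ k) j (t : ℝ)) + δ / 4 := by
        have h := geodesic_proj hX (hγ (φ k) i) (Nat.cast_nonneg s) hks (γ (φ k) j (t : ℝ))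
        rw [hγend (φ k) i] at h
        exact h
      have e2 : gp a (xm (φ k) i) (γ (φ k) j (t : ℝ)) ≤
          gp a (xm (φ k) i) (xm (φ k) j) + δ / 4 := by
        rw [gp_comm a (xm (φ k) i) (γ (φ k) j (t : ℝ)), gp_comm a (xm (φ k) i) (xm (φ k) j)]
        have h := geodesic_proj hX (hγ (φ k) j) (Nat.cast_nonneg t) hkt (xm (φ k) i)
        rw [hγend (φ k) j] at h
        exact h
      have e3 := hx1 (φ k) i j hij
      linarith
    have hpinj : ∀ i j : Fin (n+1),
        bpt a (fun t => L (i, t)) (hconvy i) = bpt a (fun t => L (j, t)) (hconvy j) → i = j := by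
      intro i j hij
      by_contra hne
      have hseq : SeqEquiv a (fun t => L (i, t)) (fun t => L (j, t)) :=
        (bpt_eq_iff hX (hconvy i) (hconvy j)).mp hij
      obtain ⟨N, hN⟩ := seqEquiv_iff.mp hseq (r + δ / 4 + δ / 4 + 1)
      have h1 := hsmall i j hne N N
      have h2 := hN N N le_rfl le_rfl
      linarith
    have hconvfy : ∀ i : Fin (n+1), ConvSeq (f a) (f ∘ (fun t => L (i, t))) :=
      fun i => htransc _ (hconvy i)
    have heq : ∀ i j : Fin (n+1), i ≠ j →
        SeqEquiv (f a) (f ∘ (fun t => L (i, t))) (f ∘ (fun t => L (j, t))) := by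
      intro i j hij
      apply seqEquiv_iff.mpr
      intro C
      obtain ⟨D, hD⟩ := huv (C + δ)
      refine ⟨⌈D⌉₊ + 1, fun s t hs ht => ?_⟩
      have hsD : D + 1 ≤ (s : ℝ) := by
        have h1 : D ≤ (⌈D⌉₊ : ℝ) := Nat.le_ceil D
        have h2 : ((⌈D⌉₊ + 1 : ℕ) : ℝ) ≤ (s : ℝ) := Nat.cast_le.mpr hs
        push_cast at h2
        linarith
      have htD : D + 1 ≤ (t : ℝ) := by
        have h1 : D ≤ (⌈D⌉₊ : ℝ) := Nat.le_ceil D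
        have h2 : ((⌈D⌉₊ + 1 : ℕ) : ℝ) ≤ (t : ℝ) := Nat.cast_le.mpr ht
        push_cast at h2
        linarith
      have hEv4 : ∀ᶠ k : ℕ in atTop, C + δ ≤ ((φ k : ℕ) : ℝ) := by
        have h0 : ∀ᶠ k : ℕ in atTop, C + δ ≤ (k : ℝ) :=
          tendsto_natCast_atTop_atTop.eventually_ge_atTop _
        filter_upwards [h0] with k hk
        exact le_trans hk (Nat.cast_le.mpr hφ.le_apply)
      obtain ⟨k, ⟨⟨hks, hkt⟩, hdi, hdj⟩, hkC⟩ :=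
        ((((hEv i s).and (hEv j t)).and
          ((Metric.tendsto_nhds.mp (hcoord i s) 1 one_pos).and
            (Metric.tendsto_nhds.mp (hcoord j t) 1 one_pos))).and hEv4).exists
      rw [min_eq_left hks] at hdi
      rw [min_eq_left hkt] at hdj
      have hgE1 : D ≤ gp a (L (i, s)) (γ (φ k) i (s : ℝ)) := by
        have h1 := gp_ge_sub a (L (i, s)) (γ (φ k) i (s : ℝ))
        rw [hya i s] at h1
        have h2 : dist (L (i, s)) (γ (φ k) i (s : ℝ)) ≤ 1 := by
          rw [dist_comm]; exact le_of_lt hdi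
        linarith
      have e1 : C + δ ≤ gp (f a) (f (L (i, s))) (f (γ (φ k) i (s : ℝ))) := hD _ _ hgE1
      have hgE2 : D ≤ gp a (γ (φ k) i (s : ℝ)) (xm (φ k) i) := by
        have h := gp_geo_endpoint (hγ (φ k) i) (Nat.cast_nonneg s) hks (xm (φ k) i) (hγend (φ k) i)
        rw [h]; linarith
      have e2 : C + δ ≤ gp (f a) (f (γ (φ k) i (s : ℝ))) (f (xm (φ k) i)) := hD _ _ hgE2
      have e3 : C + δ ≤ gp (f a) (f (xm (φ k) i)) (f (xm (φ k) j)) := by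
        have h := hx2 (φ k) i j hij
        linarith
      have hgE4 : D ≤ gp a (xm (φ k) j) (γ (φ k) j (t : ℝ)) := by
        rw [gp_comm]
        have h := gp_geo_endpoint (hγ (φ k) j) (Nat.cast_nonneg t) hkt (xm (φ k) j) (hγend (φ k) j)
        rw [h]; linarith
      have e4 : C + δ ≤ gp (f a) (f (xm (φ k) j)) (f (γ (φ k) j (t : ℝ))) := hD _ _ hgE4
      have hgE5 : D ≤ gp a (γ (φ k) j (t : ℝ)) (L (j, t)) := by
        rw [gp_comm]
        have h1 := gp_ge_sub a (L (j, t)) (γ (φ k) j (t : ℝ))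
        rw [hya j t] at h1
        have h2 : dist (L (j, t)) (γ (φ k) j (t : ℝ)) ≤ 1 := by
          rw [dist_comm]; exact le_of_lt hdj
        linarith
      have e5 : C + δ ≤ gp (f a) (f (γ (φ k) j (t : ℝ))) (f (L (j, t))) := hD _ _ hgE5
      have A1 := hY (f (L (i, s))) (f (xm (φ k) i)) (f (γ (φ k) i (s : ℝ))) (f a)
      have A2 := hY (f (L (i, s))) (f (xm (φ k) j)) (f (xm (φ k) i)) (f a)
      have A3 := hY (f (L (i, s))) (f (γ (φ k) j (t : ℝ))) (f (xm (φ k) j)) (f a)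
      have A4 := hY (f (L (i, s))) (f (L (j, t))) (f (γ (φ k) j (t : ℝ))) (f a)
      have B1 : C + δ - δ / 4 ≤ gp (f a) (f (L (i, s))) (f (xm (φ k) i)) := by
        have := le_min e1 e2; linarith [A1]
      have B2 : C + δ - δ / 4 - δ / 4 ≤ gp (f a) (f (L (i, s))) (f (xm (φ k) j)) := by
        have : C + δ - δ / 4 ≤ min (gp (f a) (f (L (i, s))) (f (xm (φ k) i)))
            (gp (f a) (f (xm (φ k) i)) (f (xm (φ k) j))) := le_min B1 (by linarith)
        linarith [A2]
      have B3 : C + δ - δ / 4 - δ / 4 - δ / 4 ≤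
          gp (f a) (f (L (i, s))) (f (γ (φ k) j (t : ℝ))) := by
        have : C + δ - δ / 4 - δ / 4 ≤ min (gp (f a) (f (L (i, s))) (f (xm (φ k) j)))
            (gp (f a) (f (xm (φ k) j)) (f (γ (φ k) j (t : ℝ)))) := le_min B2 (by linarith)
        linarith [A3]
      have B4 : C + δ - δ / 4 - δ / 4 - δ / 4 - δ / 4 ≤
          gp (f a) (f (L (i, s))) (f (L (j, t))) := by
        have : C + δ - δ / 4 - δ / 4 - δ / 4 ≤ min (gp (f a) (f (L (i, s))) (f (γ (φ k) j (t : ℝ))))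
            (gp (f a) (f (γ (φ k) j (t : ℝ))) (f (L (j, t)))) := le_min B3 (by linarith)
        linarith [A4]
      show C ≤ gp (f a) (f (L (i, s))) (f (L (j, t)))
      linarith
    -- derive the contradiction with n-to-1
    obtain ⟨sfin, hcard, hmemfin⟩ := hN1 (g (bpt a (fun t => L (i0, t)) (hconvy i0)))
    have hgeq : ∀ i : Fin (n+1),
        g (bpt a (fun t => L (i, t)) (hconvy i)) = g (bpt a (fun t => L (i0, t)) (hconvy i0)) := by
      intro i
      rcases eq_or_ne i i0 with h | h
      · rw [h]
      · have h1 := hg (fun t => L (i, t)) (hconvy i) (hconvfy i)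
        have h2 := hg (fun t => L (i0, t)) (hconvy i0) (hconvfy i0)
        rw [h1, h2]
        exact (bpt_eq_iff hY (hconvfy i) (hconvfy i0)).mpr (heq i i0 h)
    have hcard2 : (Finset.univ : Finset (Fin (n+1))).card ≤ sfin.card := by
      apply Finset.card_le_card_of_injOn (fun i => bpt a (fun t => L (i, t)) (hconvy i))
      · exact fun i _ => hmemfin _ (hgeq i)
      · exact fun i _ j _ h => hpinj i j h
    rw [Finset.card_univ, Fintype.card_fin] at hcard2
    omega
  · -- the condition implies n-to-1
    intro H q
    have claim : ∀ pp : Fin (n+1) → Boundary a,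
        (∀ i, g (pp i) = q) → ¬ Function.Injective pp := by
      intro pp hppq hinj
      choose xr hxr using fun i => Quot.exists_rep (pp i)
      have hconvx : ∀ i, ConvSeq a (xr i).1 := fun i => (xr i).2
      have hbp : ∀ i, bpt a (xr i).1 (hconvx i) = pp i := fun i => hxr i
      have hne : ∀ i j : Fin (n+1), i ≠ j → ¬ SeqEquiv a (xr i).1 (xr j).1 := by
        intro i j hij hs
        have h : pp i = pp j := by
          rw [← hbp i, ← hbp j]
          exact (bpt_eq_iff hX (hconvx i) (hconvx j)).mpr hs
        exact hij (hinj h)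
      have hsm : ∀ i j : Fin (n+1), ∃ (rr : ℝ) (NN : ℕ), i ≠ j →
          ∀ k lq, NN ≤ k → NN ≤ lq → gp a ((xr i).1 k) ((xr j).1 lq) < rr := by
        intro i j
        rcases eq_or_ne i j with h | h
        · exact ⟨0, 0, fun h' => absurd h h'⟩
        · obtain ⟨rr, NN, hrr⟩ := small_prop hX (hconvx i) (hconvx j) (hne i j h)
          exact ⟨rr, NN, fun _ => hrr⟩
      choose rr NN hrr using hsm
      have hrpos : (0:ℝ) < 1 + ∑ i : Fin (n+1), ∑ j : Fin (n+1), max (rr i j) 0 := by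
        have h0 : (0:ℝ) ≤ ∑ i : Fin (n+1), ∑ j : Fin (n+1), max (rr i j) 0 :=
          Finset.sum_nonneg (fun i _ => Finset.sum_nonneg (fun j _ => le_max_right _ _))
        linarith
      have hrle : ∀ i j : Fin (n+1),
          rr i j < 1 + ∑ i' : Fin (n+1), ∑ j' : Fin (n+1), max (rr i' j') 0 := by
        intro i j
        have h1 : rr i j ≤ max (rr i j) 0 := le_max_left _ _
        have h2 : max (rr i j) 0 ≤ ∑ j' : Fin (n+1), max (rr i j') 0 :=
          Finset.single_le_sum (fun j' _ => le_max_right (rr i j') 0) (Finset.mem_univ j)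
        have h3 : ∑ j' : Fin (n+1), max (rr i j') 0 ≤
            ∑ i' : Fin (n+1), ∑ j' : Fin (n+1), max (rr i' j') 0 :=
          Finset.single_le_sum (f := fun i' => ∑ j' : Fin (n+1), max (rr i' j') 0)
            (fun i' _ => Finset.sum_nonneg fun j' _ => le_max_right (rr i' j') 0)
            (Finset.mem_univ i)
        linarith
      obtain ⟨B, hB, hBall⟩ := H _ hrpos
      have hconvfx : ∀ i, ConvSeq (f a) (f ∘ (xr i).1) := fun i => htransc _ (hconvx i)
      have hseqf : ∀ i j : Fin (n+1), SeqEquiv (f a) (f ∘ (xr i).1) (f ∘ (xr j).1) := by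
        intro i j
        apply (bpt_eq_iff hY (hconvfx i) (hconvfx j)).mp
        rw [← hg ((xr i).1) (hconvx i) (hconvfx i), ← hg ((xr j).1) (hconvx j) (hconvfx j)]
        rw [hbp i, hbp j, hppq i, hppq j]
      have hMMex : ∀ i j : Fin (n+1), ∃ M : ℕ, ∀ k lq, M ≤ k → M ≤ lq →
          B + 1 ≤ gp (f a) (f ((xr i).1 k)) (f ((xr j).1 lq)) := by
        intro i j
        obtain ⟨M, hM⟩ := seqEquiv_iff.mp (hseqf i j) (B + 1)
        exact ⟨M, hM⟩
      choose MM hMM using hMMex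
      set K : ℕ := (∑ i : Fin (n+1), ∑ j : Fin (n+1), NN i j) +
        (∑ i : Fin (n+1), ∑ j : Fin (n+1), MM i j) with hK
      have hKN : ∀ i j : Fin (n+1), NN i j ≤ K := by
        intro i j
        have h1 : NN i j ≤ ∑ j' : Fin (n+1), NN i j' :=
          Finset.single_le_sum (fun _ _ => Nat.zero_le _) (Finset.mem_univ j)
        have h2 : ∑ j' : Fin (n+1), NN i j' ≤ ∑ i' : Fin (n+1), ∑ j' : Fin (n+1), NN i' j' :=
          Finset.single_le_sum (f := fun i' => ∑ j' : Fin (n+1), NN i' j')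
            (fun _ _ => Nat.zero_le _) (Finset.mem_univ i)
        omega
      have hKM : ∀ i j : Fin (n+1), MM i j ≤ K := by
        intro i j
        have h1 : MM i j ≤ ∑ j' : Fin (n+1), MM i j' :=
          Finset.single_le_sum (fun _ _ => Nat.zero_le _) (Finset.mem_univ j)
        have h2 : ∑ j' : Fin (n+1), MM i j' ≤ ∑ i' : Fin (n+1), ∑ j' : Fin (n+1), MM i' j' :=
          Finset.single_le_sum (f := fun i' => ∑ j' : Fin (n+1), MM i' j')
            (fun _ _ => Nat.zero_le _) (Finset.mem_univ i)
        omega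
      obtain ⟨k, m, hkm, hle⟩ := hBall (fun i => (xr i).1 K) (by
        intro i j hij
        exact lt_of_lt_of_le (hrr i j hij K K (hKN i j) (hKN i j)) (le_of_lt (hrle i j)))
      have hgt := hMM k m K K (hKM k m) (hKM k m)
      linarith
    have hfin : {pb : Boundary a | g pb = q}.Finite := by
      by_contra hinf
      have e := Set.Infinite.natEmbedding _ hinf
      apply claim (fun i : Fin (n+1) => (e i.val).1) (fun i => (e i.val).2)
      intro i j hij
      have h2 : e i.val = e j.val := Subtype.ext hij
      exact Fin.ext (e.injective h2)
    refine ⟨hfin.toFinset, ?_, ?_⟩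
    · by_contra hcard
      push_neg at hcard
      obtain ⟨t, hts, htc⟩ := Finset.exists_subset_card_eq (by omega : n + 1 ≤ hfin.toFinset.card)
      apply claim (fun i : Fin (n+1) => ((t.equivFin.symm (Fin.cast htc.symm i)) : Boundary a))
      · intro i
        have hmem : ((t.equivFin.symm (Fin.cast htc.symm i)) : Boundary a) ∈ t :=
          (t.equivFin.symm _).2
        have h := hts hmem
        rw [Set.Finite.mem_toFinset] at h
        exact h
      · intro i j hij
        have h1 : t.equivFin.symm (Fin.cast htc.symm i) = t.equivFin.symm (Fin.cast htc.symm j) :=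
          Subtype.ext hij
        have h2 := t.equivFin.symm.injective h1
        exact Fin.cast_injective _ h2
    · intro pb hpb
      rw [Set.Finite.mem_toFinset]
      exact hpb


end Gromov
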